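/- arXiv:1711.06952 — 6 statements merged into one kernel-verified Lean document; each statement's English description precedes it below -/
import Mathlib

section
/- Fix α with 1 < α < √2, a constant c > 0, and 0 < r < 1. Let u, v, w ∈ ℝ^d with z the orthogonal projection of w onto the line through u and v, and suppose z lies on the segment [u,v], |w − z| ≥ r, and |u − z| ≤ |u − v| ≤ c r^{1/α}. Then |u − w| ≥ |u − z| + (3 max(c,1))^{-1} r^α and |w − v| ≥ |z − v| + (3 max(c,1))^{-1} r^α; consequently |u−w| + |w−v| ≥ |u−v| + 2(3 max(c,1))^{-1} r^α. -/
open Set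
open scoped RealInnerProductSpace

set_option maxHeartbeats 1000000 in
theorem stmt6 {d : ℕ} (α c r : ℝ) (hα : 1 < α) (hα2 : α ^ 2 < 2) (hc : 0 < c)
    (hr0 : 0 < r) (hr1 : r < 1)
    (u v w z : EuclideanSpace ℝ (Fin d))
    -- `z` lies on the segment `[u, v]` and is the orthogonal projection of `w`
    -- onto the line through `u` and `v`:
    (hzseg : z ∈ segment ℝ u v) (horth : ⟪w - z, v - u⟫ = 0)
    (hwz : r ≤ ‖w - z‖) (huz : ‖u - z‖ ≤ ‖u - v‖) (huv : ‖u - v‖ ≤ c * r ^ (1 / α))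
    (h1 : ‖u - w‖ < 1) (h2 : ‖v - w‖ < 1) (h3 : ‖u - v‖ < 1) :
    ‖u - z‖ + (3 * max c 1)⁻¹ * r ^ α ≤ ‖u - w‖ ∧
    ‖z - v‖ + (3 * max c 1)⁻¹ * r ^ α ≤ ‖w - v‖ ∧
    ‖u - v‖ + 2 * (3 * max c 1)⁻¹ * r ^ α ≤ ‖u - w‖ + ‖w - v‖ := by
  obtain ⟨a, b, ha, hb, hab, hz⟩ := hzseg
  have huz' : u - z = b • (u - v) := by
    rw [← hz]
    have : a = 1 - b := by linarith
    rw [this]; module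
  have hzv' : z - v = a • (u - v) := by
    rw [← hz]
    have : b = 1 - a := by linarith
    rw [this]; module
  have hM0 : (0:ℝ) < max c 1 := lt_of_lt_of_le one_pos (le_max_right _ _)
  set M := max c 1 with hMdef
  have hM1 : (1:ℝ) ≤ M := le_max_right _ _
  have hcM : c ≤ M := le_max_left _ _
  have hα0 : (0:ℝ) < α := by linarith
  have hrα : 0 < r ^ α := Real.rpow_pos_of_pos hr0 α
  set δ : ℝ := (3 * M)⁻¹ * r ^ α with hδdef
  have hδ0 : 0 < δ := by positivity
  -- exponent inequalities
  have h2a : (2:ℝ) ≤ 2 * α := by linarith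
  have h2b : (2:ℝ) ≤ α + 1/α := by
    rw [← sub_nonneg]
    have : α + 1/α - 2 = (α-1)^2 / α := by field_simp; ring
    rw [this]; positivity
  have h2eq : r ^ (2:ℝ) = r ^ 2 := by
    rw [show (2:ℝ) = ((2:ℕ):ℝ) by norm_num, Real.rpow_natCast]
  have hA : r ^ (α + 1/α) ≤ r ^ 2 := by
    rw [← h2eq]; exact Real.rpow_le_rpow_of_exponent_ge hr0 hr1.le h2b
  have hB : r ^ (2 * α) ≤ r ^ 2 := by
    rw [← h2eq]; exact Real.rpow_le_rpow_of_exponent_ge hr0 hr1.le h2a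
  have hprod : r ^ α * r ^ (1/α) = r ^ (α + 1/α) := (Real.rpow_add hr0 _ _).symm
  have hsq : r ^ α * r ^ α = r ^ (2 * α) := by
    rw [two_mul, Real.rpow_add hr0]
  have hApos : 0 < r ^ (α + 1/α) := Real.rpow_pos_of_pos hr0 _
  have hBpos : 0 < r ^ (2 * α) := Real.rpow_pos_of_pos hr0 _
  have hi : (3 * M)⁻¹ ≤ 1/3 := by
    rw [show (1:ℝ)/3 = (3:ℝ)⁻¹ by norm_num]
    exact inv_anti₀ (by norm_num) (by linarith)
  have hic : c * (3 * M)⁻¹ ≤ 1/3 := by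
    calc c * (3 * M)⁻¹ ≤ M * (3 * M)⁻¹ :=
          mul_le_mul_of_nonneg_right hcM (by positivity)
      _ = 1/3 := by field_simp
  -- key numeric inequality
  have hkey : 2 * δ * (c * r ^ (1/α)) + δ^2 ≤ r^2 := by
    have e1 : 2 * δ * (c * r ^ (1/α)) = 2 * (c * (3*M)⁻¹) * r ^ (α + 1/α) := by
      rw [← hprod, hδdef]; ring
    have e2 : δ^2 = ((3*M)⁻¹)^2 * r ^ (2*α) := by
      rw [← hsq, hδdef]; ring
    rw [e1, e2]
    have hinv0 : (0:ℝ) ≤ (3*M)⁻¹ := by positivity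
    have p1 : c * (3*M)⁻¹ * r ^ (α + 1/α) ≤ (1/3) * r ^ (α + 1/α) :=
      mul_le_mul_of_nonneg_right hic hApos.le
    have p2 : ((3*M)⁻¹)^2 * r ^ (2*α) ≤ (1/9) * r ^ (2*α) := by
      have h9 : ((3*M)⁻¹)^2 ≤ 1/9 := by
        have := mul_le_mul hi hi hinv0 (by norm_num : (0:ℝ) ≤ 1/3)
        calc ((3*M)⁻¹)^2 = (3*M)⁻¹ * (3*M)⁻¹ := sq ((3*M)⁻¹)
          _ ≤ 1/3 * (1/3) := this
          _ = 1/9 := by norm_num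
      exact mul_le_mul_of_nonneg_right h9 hBpos.le
    linarith [hA, hB, sq_nonneg r, p1, p2]
  -- orthogonality consequences
  have hvu : ⟪u - v, w - z⟫ = 0 := by
    have h' := horth
    rw [real_inner_comm] at h'
    rw [show u - v = -(v - u) from (neg_sub v u).symm, inner_neg_left, h', neg_zero]
  have hiu : ⟪u - z, w - z⟫ = 0 := by
    rw [huz', real_inner_smul_left, hvu, mul_zero]
  have hiv : ⟪z - v, w - z⟫ = 0 := by
    rw [hzv', real_inner_smul_left, hvu, mul_zero]
  -- Pythagoras
  have hpu : ‖u - w‖^2 = ‖u - z‖^2 + ‖w - z‖^2 := by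
    have e : u - w = (u - z) - (w - z) := by abel
    rw [e, norm_sub_sq_real, hiu]; ring
  have hpv : ‖w - v‖^2 = ‖z - v‖^2 + ‖w - z‖^2 := by
    have e : w - v = (w - z) + (z - v) := by abel
    rw [e, norm_add_sq_real, real_inner_comm, hiv]; ring
  -- lengths add up
  have hsum : ‖u - z‖ + ‖z - v‖ = ‖u - v‖ := by
    rw [huz', hzv', norm_smul, norm_smul, Real.norm_of_nonneg hb,
      Real.norm_of_nonneg ha]
    rw [← add_mul]
    rw [show b + a = 1 by linarith, one_mul]
  have hzv_le : ‖z - v‖ ≤ ‖u - v‖ := by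
    have := norm_nonneg (u - z); linarith
  have hx1 : ‖u - z‖ ≤ c * r ^ (1/α) := huz.trans huv
  have hx2 : ‖z - v‖ ≤ c * r ^ (1/α) := hzv_le.trans huv
  have hwz2 : r^2 ≤ ‖w - z‖^2 := pow_le_pow_left₀ hr0.le hwz 2
  have g1 : ‖u - z‖ + δ ≤ ‖u - w‖ := by
    have hsq1 : (‖u - z‖ + δ)^2 ≤ ‖u - w‖^2 := by
      rw [hpu]
      have q1 : ‖u - z‖ * δ ≤ (c * r ^ (1/α)) * δ :=
        mul_le_mul_of_nonneg_right hx1 hδ0.le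
      linarith [hkey, hwz2, q1]
    have h' := Real.sqrt_le_sqrt hsq1
    rwa [Real.sqrt_sq (add_nonneg (norm_nonneg _) hδ0.le),
      Real.sqrt_sq (norm_nonneg _)] at h'
  have g2 : ‖z - v‖ + δ ≤ ‖w - v‖ := by
    have hsq2 : (‖z - v‖ + δ)^2 ≤ ‖w - v‖^2 := by
      rw [hpv]
      have q2 : ‖z - v‖ * δ ≤ (c * r ^ (1/α)) * δ :=
        mul_le_mul_of_nonneg_right hx2 hδ0.le
      linarith [hkey, hwz2, q2]
    have h' := Real.sqrt_le_sqrt hsq2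
    rwa [Real.sqrt_sq (add_nonneg (norm_nonneg _) hδ0.le),
      Real.sqrt_sq (norm_nonneg _)] at h'
  refine ⟨g1, g2, ?_⟩
  have : 2 * (3 * M)⁻¹ * r ^ α = 2 * δ := by rw [hδdef]; ring
  rw [this]
  linarith
end

section
/- Let h : D → ℝ be continuous with 0 < m₁ ≤ h(x) ≤ m₂, and set f(x,v) = h(x)|v|. Then f satisfies the Pythagoras α-condition for every α > 1: there is a constant C = C(α, m₁, c) such that for any x ∈ D and points u, v, w with |u−w|, |v−w|, |u−v| < η < 1, dist(w, line(u,v)) ≥ r, and |u−v| ≤ c r^{1/α} for some 0 < r < 1, one has f(x, w−u) + f(x, v−w) ≥ f(x, v−u) + C r^α. -/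
open Set

private lemma stmt7_sum (r a b L I : ℝ) (hr0 : 0 < r) (har : r ≤ a) (hbr : r ≤ b)
    (htri : L ≤ a + b) (hL0 : 0 ≤ L)
    (hr2 : r ^ 2 ≤ (b / (a + b)) ^ 2 * a ^ 2
      + 2 * ((b / (a + b)) * (a / (a + b))) * I + (a / (a + b)) ^ 2 * b ^ 2)
    (hL2 : L ^ 2 = a ^ 2 - 2 * I + b ^ 2) :
    L ^ 2 + 4 * r ^ 2 ≤ (a + b) ^ 2 := by
  have hab1 : 0 < a + b := by linarith
  have hkey : r ^ 2 * (a + b) ^ 2 ≤ a * b * ((a + b) ^ 2 - L ^ 2) := by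
    have h2 : ((b / (a + b)) ^ 2 * a ^ 2
        + 2 * ((b / (a + b)) * (a / (a + b))) * I + (a / (a + b)) ^ 2 * b ^ 2)
        * (a + b) ^ 2 = a * b * ((a + b) ^ 2 - L ^ 2) := by
      rw [hL2]
      field_simp
      ring
    calc r ^ 2 * (a + b) ^ 2
        ≤ ((b / (a + b)) ^ 2 * a ^ 2 + 2 * ((b / (a + b)) * (a / (a + b))) * I
            + (a / (a + b)) ^ 2 * b ^ 2) * (a + b) ^ 2 :=
          mul_le_mul_of_nonneg_right hr2 (sq_nonneg _)
      _ = a * b * ((a + b) ^ 2 - L ^ 2) := h2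
  have hK0 : 0 ≤ (a + b) ^ 2 - L ^ 2 := by nlinarith [htri, hL0]
  nlinarith [hkey, mul_nonneg (sq_nonneg (a - b)) hK0, pow_pos hab1 2]

private lemma stmt7_arith (α c r a b L : ℝ) (hα : 1 < α) (hc : 0 < c)
    (hr0 : 0 < r) (hr1 : r < 1) (har : r ≤ a) (hbr : r ≤ b) (hL0' : 0 ≤ L)
    (hLc : L ≤ c * r ^ (1 / α))
    (hsum : L ^ 2 + 4 * r ^ 2 ≤ (a + b) ^ 2) :
    min 1 (4 / (3 * c)) * r ^ α ≤ a + b - L := by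
  have hα0 : (0:ℝ) < α := by linarith
  have hrα : 0 < r ^ α := Real.rpow_pos_of_pos hr0 α
  have hab0 : 0 ≤ a + b := by linarith
  have hT0 : 0 ≤ a + b - L := by
    nlinarith [hsum, hr0, hL0', hab0, sq_nonneg r]
  rcases le_or_gt (2 * L) (a + b) with hcase | hcase
  · have hrαr : r ^ α ≤ r := by
      have h' := Real.rpow_le_rpow_of_exponent_ge hr0 hr1.le hα.le
      rwa [Real.rpow_one] at h'
    have hmin1 : min 1 (4 / (3 * c)) ≤ 1 := min_le_left _ _
    nlinarith [mul_le_mul_of_nonneg_right hmin1 hrα.le]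
  · have hL0 : 0 < L := by linarith
    have h1 : 4 * r ^ 2 ≤ 3 * L * (a + b - L) := by
      nlinarith [hsum, mul_le_mul_of_nonneg_left
        (show a + b + L ≤ 3 * L by linarith) hT0]
    have h2 : L * r ^ α ≤ c * r ^ 2 := by
      have hexp : (2:ℝ) ≤ 1 / α + α := by
        have hinv : (1 / α) * α = 1 := by field_simp
        nlinarith [sq_nonneg (α - 1), hinv, hα0]
      have e1 : r ^ ((1:ℝ) / α + α) ≤ r ^ (2:ℝ) :=
        Real.rpow_le_rpow_of_exponent_ge hr0 hr1.le hexp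
      have e2 : r ^ ((1:ℝ) / α + α) = r ^ ((1:ℝ) / α) * r ^ α :=
        Real.rpow_add hr0 _ _
      have e3 : r ^ (2:ℝ) = r ^ 2 := by
        rw [show (2:ℝ) = ((2:ℕ):ℝ) by norm_num, Real.rpow_natCast]
      have e4 : L * r ^ α ≤ c * r ^ ((1:ℝ) / α) * r ^ α :=
        mul_le_mul_of_nonneg_right hLc hrα.le
      calc L * r ^ α ≤ c * r ^ ((1:ℝ) / α) * r ^ α := e4
        _ = c * (r ^ ((1:ℝ) / α + α)) := by rw [e2]; ring
        _ ≤ c * r ^ (2:ℝ) := by nlinarith [e1]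
        _ = c * r ^ 2 := by rw [e3]
    have hmin2 : min 1 (4 / (3 * c)) ≤ 4 / (3 * c) := min_le_right _ _
    have hstep : 4 / (3 * c) * r ^ α ≤ a + b - L := by
      rw [div_mul_eq_mul_div, div_le_iff₀ (by positivity)]
      have h3 : L * (4 * r ^ α) ≤ L * ((a + b - L) * (3 * c)) := by
        nlinarith [h1, h2, hc.le]
      exact le_of_mul_le_mul_left h3 hL0
    nlinarith [mul_le_mul_of_nonneg_right hmin2 hrα.le]

private lemma stmt7_final (H m₁ M rα a b L : ℝ) (hx1 : m₁ ≤ H) (hm₁ : 0 < m₁)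
    (hrα : 0 < rα) (hM0 : 0 ≤ M) (key : M * rα ≤ a + b - L)
    (hT0 : 0 ≤ a + b - L) :
    H * L + m₁ * M * rα ≤ H * a + H * b := by
  nlinarith [mul_le_mul_of_nonneg_right hx1 hT0,
    mul_le_mul_of_nonneg_left key hm₁.le]

theorem stmt7 {d : ℕ} (D : Set (EuclideanSpace ℝ (Fin d)))
    (h : EuclideanSpace ℝ (Fin d) → ℝ) (hcont : Continuous h)
    (m₁ m₂ : ℝ) (hm₁ : 0 < m₁)
    (hh : ∀ x ∈ D, m₁ ≤ h x ∧ h x ≤ m₂)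
    (f : EuclideanSpace ℝ (Fin d) → EuclideanSpace ℝ (Fin d) → ℝ)
    (hf : ∀ x w, f x w = h x * ‖w‖)
    (α : ℝ) (hα : 1 < α) (c : ℝ) (hc : 0 < c) (η : ℝ) (hη0 : 0 < η) (hη : η < 1) :
    ∃ C > 0, ∀ x ∈ D, ∀ u v w : EuclideanSpace ℝ (Fin d), ∀ r : ℝ, 0 < r → r < 1 →
      ‖u - w‖ < η → ‖v - w‖ < η → ‖u - v‖ < η →
      r ≤ Metric.infDist w (segment ℝ u v) →
      ‖u - v‖ ≤ c * r ^ (1 / α) →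
      f x (v - u) + C * r ^ α ≤ f x (w - u) + f x (v - w) := by
  refine ⟨m₁ * min 1 (4 / (3 * c)), by positivity, ?_⟩
  intro x hx u v w r hr0 hr1 huw hvw huv hdist hLc
  have hx1 := (hh x hx).1
  set a := ‖w - u‖ with ha
  set b := ‖w - v‖ with hb
  set L := ‖v - u‖ with hLdef
  have hbrev : ‖v - w‖ = b := norm_sub_rev v w
  have hLrev : ‖u - v‖ = L := norm_sub_rev u v
  rw [hLrev] at hLc
  have har : r ≤ a := by
    have h' : Metric.infDist w (segment ℝ u v) ≤ dist w u :=
      Metric.infDist_le_dist_of_mem (left_mem_segment ℝ u v)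
    rw [dist_eq_norm, ← ha] at h'
    linarith
  have hbr : r ≤ b := by
    have h' : Metric.infDist w (segment ℝ u v) ≤ dist w v :=
      Metric.infDist_le_dist_of_mem (right_mem_segment ℝ u v)
    rw [dist_eq_norm, ← hb] at h'
    linarith
  have hab1 : (0:ℝ) < a + b := by linarith
  have hp0 : (0:ℝ) < b / (a + b) := div_pos (by linarith) hab1
  have hq0 : (0:ℝ) < a / (a + b) := div_pos (by linarith) hab1
  have hpq : b / (a + b) + a / (a + b) = 1 := by
    field_simp
    ring
  have hzmem : (b / (a + b)) • u + (a / (a + b)) • v ∈ segment ℝ u v :=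
    ⟨b / (a + b), a / (a + b), hp0.le, hq0.le, hpq, rfl⟩
  have hrz : r ≤ ‖w - ((b / (a + b)) • u + (a / (a + b)) • v)‖ := by
    have h' : Metric.infDist w (segment ℝ u v) ≤ dist w ((b / (a + b)) • u + (a / (a + b)) • v) :=
      Metric.infDist_le_dist_of_mem hzmem
    rw [dist_eq_norm] at h'
    linarith
  have hwz : w - ((b / (a + b)) • u + (a / (a + b)) • v)
      = (b / (a + b)) • (w - u) + (a / (a + b)) • (w - v) := by
    have h1 : w = (b / (a + b) + a / (a + b)) • w := by rw [hpq, one_smul]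
    nth_rewrite 1 [h1]
    module
  have hexp : ‖(b / (a + b)) • (w - u) + (a / (a + b)) • (w - v)‖ ^ 2
      = (b / (a + b)) ^ 2 * a ^ 2
        + 2 * ((b / (a + b)) * (a / (a + b))) * (inner ℝ (w - u) (w - v) : ℝ)
        + (a / (a + b)) ^ 2 * b ^ 2 := by
    rw [norm_add_sq_real, norm_smul, norm_smul, real_inner_smul_left,
      real_inner_smul_right, Real.norm_eq_abs, Real.norm_eq_abs,
      abs_of_pos hp0, abs_of_pos hq0, ← ha, ← hb]
    ring
  have hr2 : r ^ 2 ≤ (b / (a + b)) ^ 2 * a ^ 2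
      + 2 * ((b / (a + b)) * (a / (a + b))) * (inner ℝ (w - u) (w - v) : ℝ)
      + (a / (a + b)) ^ 2 * b ^ 2 := by
    rw [← hexp, ← hwz]
    exact pow_le_pow_left₀ hr0.le hrz 2
  have hL2 : L ^ 2 = a ^ 2 - 2 * (inner ℝ (w - u) (w - v) : ℝ) + b ^ 2 := by
    have h2 := norm_sub_sq_real (w - u) (w - v)
    rw [show (w - u) - (w - v) = v - u from by abel] at h2
    rw [hLdef, ha, hb]
    linarith
  have htri : L ≤ a + b := by
    have h' : ‖v - u‖ ≤ ‖v - w‖ + ‖w - u‖ := norm_sub_le_norm_sub_add_norm_sub v w u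
    rw [hbrev, ← ha, ← hLdef] at h'
    linarith
  have hL0' : 0 ≤ L := by rw [hLdef]; exact norm_nonneg _
  clear_value a b L
  have hsum : L ^ 2 + 4 * r ^ 2 ≤ (a + b) ^ 2 :=
    stmt7_sum r a b L (inner ℝ (w - u) (w - v) : ℝ) hr0 har hbr htri hL0' hr2 hL2
  have key := stmt7_arith α c r a b L hα hc hr0 hr1 har hbr hL0' hLc hsum
  have hT0 : 0 ≤ a + b - L := le_trans (by positivity) key
  rw [hf, hf, hf, hbrev, ← hLdef, ← ha]
  exact stmt7_final (h x) m₁ (min 1 (4 / (3 * c))) (r ^ α) a b L hx1 hm₁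
    (Real.rpow_pos_of_pos hr0 α) (by positivity) key hT0
end

section
/- Let f : D × ℝ^d → [0,∞) satisfy: (Lip) |f(x,v) − f(y,v)| ≤ C|x−y||v| for all x,y ∈ D, v ∈ ℝ^d; (Hilb) for each x, the straight line minimizes ∫₀¹ f(x, γ'(t)) dt among Lipschitz paths in D from a to b, with infimum f(x, b−a); and the ellipticity m₁|v| ≤ f(x,v) ≤ m₂|v|. Then for a, b ∈ D with |b−a| ≤ 1, |d_f(a,b) − f(a, b−a)| ≤ c₁|b−a|², where c₁ = C(m₂/m₁)² and d_f(a,b) is the infimal cost over Lipschitz paths in D from a to b. -/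
open MeasureTheory Set Filter

section Aux1

variable {E : Type*} [NormedAddCommGroup E] [NormedSpace ℝ E]

lemma lip_norm_deriv_le {K : NNReal} {γ : ℝ → E} (h : LipschitzWith K γ) (t : ℝ) :
    ‖deriv γ t‖ ≤ K := by
  by_cases hd : DifferentiableAt ℝ γ t
  · have h1 : Tendsto (fun x => ‖slope γ t x‖) (nhdsWithin t {t}ᶜ) (nhds ‖deriv γ t‖) :=
      (continuous_norm.tendsto _).comp (hasDerivAt_iff_tendsto_slope.1 hd.hasDerivAt)
    refine le_of_tendsto h1 (eventually_nhdsWithin_of_forall fun x hx => ?_)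
    have hxt : (0:ℝ) < |x - t| := by
      simpa using abs_pos.2 (sub_ne_zero.2 hx)
    have hlip : ‖γ x - γ t‖ ≤ K * |x - t| := by
      simpa [dist_eq_norm, Real.dist_eq] using h.dist_le_mul x t
    rw [slope_def_module, norm_smul, norm_inv, Real.norm_eq_abs]
    calc |x - t|⁻¹ * ‖γ x - γ t‖ ≤ |x - t|⁻¹ * (K * |x - t|) := by gcongr
      _ = K := by field_simp
  · simp [deriv_zero_of_not_differentiableAt hd, NNReal.coe_nonneg]

end Aux1

section Aux2
set_option linter.unusedSectionVars false

variable {E : Type*} [NormedAddCommGroup E] [NormedSpace ℝ E]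
  [FiniteDimensional ℝ E] [MeasurableSpace E] [BorelSpace E]

lemma lip_norm_sub_le_integral {K : NNReal} {γ : ℝ → E} (h : LipschitzWith K γ)
    {t : ℝ} (ht : 0 ≤ t) :
    ‖γ t - γ 0‖ ≤ ∫ s in (0:ℝ)..t, ‖deriv γ s‖ := by
  have hc : Continuous γ := h.continuous
  set e : ℕ → ℝ := fun n => 1 / (n + 1) with he
  have hepos : ∀ n : ℕ, (0:ℝ) < e n := fun n => by positivity
  have avg : ∀ (n : ℕ) (x : ℝ), ‖(((n:ℝ)+1) • ∫ s in x..(x + e n), γ s) - γ x‖ ≤ K * e n := by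
    intro n x
    have h1 : γ x = ((n:ℝ)+1) • ∫ s in x..(x + e n), γ x := by
      rw [intervalIntegral.integral_const, add_sub_cancel_left, smul_smul]
      rw [show ((n:ℝ)+1) * e n = 1 by rw [he]; field_simp, one_smul]
    rw [h1, ← smul_sub, ← intervalIntegral.integral_sub (hc.intervalIntegrable _ _)
      (continuous_const.intervalIntegrable _ _), norm_smul]
    have h2 : ‖∫ s in x..(x + e n), (γ s - γ x)‖ ≤ (K * e n) * |x + e n - x| := by
      apply intervalIntegral.norm_integral_le_of_norm_le_const
      intro s hs
      rw [uIoc_of_le (by linarith [hepos n])] at hs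
      have hd : ‖γ s - γ x‖ ≤ K * |s - x| := by
        simpa [dist_eq_norm, Real.dist_eq] using h.dist_le_mul s x
      refine hd.trans ?_
      have : |s - x| ≤ e n := by
        rw [abs_of_nonneg (by linarith [hs.1.le])]; linarith [hs.2]
      nlinarith [K.coe_nonneg, hepos n]
    calc ‖((n:ℝ)+1)‖ * ‖∫ s in x..(x + e n), (γ s - γ x)‖
        ≤ ((n:ℝ)+1) * ((K * e n) * |x + e n - x|) := by
          rw [Real.norm_eq_abs, abs_of_nonneg (by positivity)]; gcongr
      _ = K * e n := by
          rw [add_sub_cancel_left, abs_of_nonneg (hepos n).le]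
          rw [show ((n:ℝ)+1) * (K * e n * e n) = K * e n * (((n:ℝ)+1) * e n) by ring,
            show ((n:ℝ)+1) * e n = 1 by rw [he]; field_simp, mul_one]
  have key : ∀ n : ℕ, ∫ s in (0:ℝ)..t, (γ (s + e n) - γ s) =
      (∫ s in t..(t + e n), γ s) - ∫ s in (0:ℝ)..(e n), γ s := by
    intro n
    have i0 : ∀ a b : ℝ, IntervalIntegrable γ volume a b := fun a b => hc.intervalIntegrable a b
    have icomp : IntervalIntegrable (fun s => γ (s + e n)) volume 0 t :=
      (hc.comp (continuous_id.add continuous_const)).intervalIntegrable 0 t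
    rw [intervalIntegral.integral_sub icomp (i0 _ _)]
    rw [intervalIntegral.integral_comp_add_right γ (e n), zero_add]
    have a1 : (∫ s in (0:ℝ)..(e n), γ s) + ∫ s in (e n)..(t + e n), γ s
        = ∫ s in (0:ℝ)..(t + e n), γ s :=
      intervalIntegral.integral_add_adjacent_intervals (i0 _ _) (i0 _ _)
    have a2 : (∫ s in (0:ℝ)..t, γ s) + ∫ s in t..(t + e n), γ s
        = ∫ s in (0:ℝ)..(t + e n), γ s :=
      intervalIntegral.integral_add_adjacent_intervals (i0 _ _) (i0 _ _)
    rw [sub_eq_sub_iff_add_eq_add]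
    rw [add_comm] at a1
    rw [a1, ← a2]; abel
  -- step 1 : quantitative bound with difference quotients
  have step1 : ∀ n : ℕ, ‖γ t - γ 0‖ ≤
      (∫ s in (0:ℝ)..t, ((n:ℝ)+1) * ‖γ (s + e n) - γ s‖) + 2 * K * e n := by
    intro n
    set A : E := ((n:ℝ)+1) • (∫ s in (0:ℝ)..t, (γ (s + e n) - γ s)) with hA
    have hng : ‖γ t - γ 0 - A‖ ≤ 2 * K * e n := by
      rw [hA, key n, smul_sub]
      calc ‖γ t - γ 0 - ((((n:ℝ)+1) • ∫ s in t..(t + e n), γ s) -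
              ((n:ℝ)+1) • ∫ s in (0:ℝ)..(e n), γ s)‖
          = ‖(γ t - (((n:ℝ)+1) • ∫ s in t..(t + e n), γ s)) -
              (γ 0 - (((n:ℝ)+1) • ∫ s in (0:ℝ)..(e n), γ s))‖ := by congr 1; abel
        _ ≤ ‖γ t - (((n:ℝ)+1) • ∫ s in t..(t + e n), γ s)‖ +
              ‖γ 0 - (((n:ℝ)+1) • ∫ s in (0:ℝ)..(e n), γ s)‖ := norm_sub_le _ _
        _ ≤ K * e n + K * e n := by
            rw [norm_sub_rev, norm_sub_rev (γ 0)]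
            exact add_le_add (avg n t) (by simpa using avg n 0)
        _ = 2 * K * e n := by ring
    have hq : ‖A‖ ≤ ∫ s in (0:ℝ)..t, ((n:ℝ)+1) * ‖γ (s + e n) - γ s‖ := by
      rw [hA, norm_smul, Real.norm_eq_abs, abs_of_nonneg (by positivity),
        intervalIntegral.integral_const_mul]
      exact mul_le_mul_of_nonneg_left
        (intervalIntegral.norm_integral_le_integral_norm ht) (by positivity)
    calc ‖γ t - γ 0‖ ≤ ‖A‖ + ‖γ t - γ 0 - A‖ := by
          have : γ t - γ 0 = A + (γ t - γ 0 - A) := by abel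
          rw [this]; exact (norm_add_le _ _).trans (by rw [← this])
      _ ≤ (∫ s in (0:ℝ)..t, ((n:ℝ)+1) * ‖γ (s + e n) - γ s‖) + 2 * K * e n :=
          add_le_add hq hng
  -- step 2: dominated convergence
  have hlim : Tendsto (fun n : ℕ => ∫ s in (0:ℝ)..t, ((n:ℝ)+1) * ‖γ (s + e n) - γ s‖) atTop
      (nhds (∫ s in (0:ℝ)..t, ‖deriv γ s‖)) := by
    rw [intervalIntegral.integral_of_le ht]
    have hrw : ∀ n : ℕ, (∫ s in (0:ℝ)..t, ((n:ℝ)+1) * ‖γ (s + e n) - γ s‖)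
        = ∫ s in Ioc (0:ℝ) t, ((n:ℝ)+1) * ‖γ (s + e n) - γ s‖ := fun n =>
      intervalIntegral.integral_of_le ht
    simp_rw [hrw]
    apply tendsto_integral_of_dominated_convergence (fun _ => (K:ℝ))
    · intro n
      exact ((continuous_const.mul ((hc.comp (continuous_id.add
        continuous_const)).sub hc).norm).aestronglyMeasurable).restrict
    · exact integrableOn_const measure_Ioc_lt_top.ne
    · intro n
      filter_upwards with s
      rw [Real.norm_eq_abs, abs_of_nonneg (by positivity)]
      have hd : ‖γ (s + e n) - γ s‖ ≤ K * e n := by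
        have := h.dist_le_mul (s + e n) s
        rw [dist_eq_norm, Real.dist_eq] at this
        simpa [abs_of_nonneg (hepos n).le] using this
      calc ((n:ℝ)+1) * ‖γ (s + e n) - γ s‖ ≤ ((n:ℝ)+1) * (K * e n) := by
            gcongr
        _ = K := by
          rw [show ((n:ℝ)+1) * (K * e n) = K * (((n:ℝ)+1) * e n) by ring,
            show ((n:ℝ)+1) * e n = 1 by rw [he]; field_simp, mul_one]
    · have hae : ∀ᵐ s ∂(volume.restrict (Ioc (0:ℝ) t)), DifferentiableAt ℝ γ s :=
        ae_restrict_of_ae h.ae_differentiableAt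
      filter_upwards [hae] with s hs
      have hd := hasDerivAt_iff_tendsto_slope.1 hs.hasDerivAt
      have hseq : Tendsto (fun n : ℕ => s + e n) atTop (nhdsWithin s {s}ᶜ) := by
        apply tendsto_nhdsWithin_of_tendsto_nhds_of_eventually_within
        · have hz : Tendsto (fun n : ℕ => s + e n) atTop (nhds (s + 0)) :=
            tendsto_const_nhds.add (by rw [he]; exact tendsto_one_div_add_atTop_nhds_zero_nat)
          simpa using hz
        · filter_upwards with n
          simp only [mem_compl_iff, mem_singleton_iff]
          have := hepos n; intro hc'; nlinarith [congrArg (fun z => z - s) hc']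
      have h2 := (continuous_norm.tendsto _).comp (hd.comp hseq)
      refine h2.congr fun n => ?_
      simp only [Function.comp_apply, slope_def_module, add_sub_cancel_left]
      rw [norm_smul, norm_inv, Real.norm_eq_abs, abs_of_nonneg (hepos n).le]
      congr 1
      rw [he]; field_simp
  have h2 : Tendsto (fun n : ℕ =>
      (∫ s in (0:ℝ)..t, ((n:ℝ)+1) * ‖γ (s + e n) - γ s‖) + 2 * K * e n) atTop
      (nhds ((∫ s in (0:ℝ)..t, ‖deriv γ s‖) + 0)) := by
    apply hlim.add
    simpa [he, mul_comm] using tendsto_one_div_add_atTop_nhds_zero_nat.const_mul (2*(K:ℝ))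
  rw [add_zero] at h2
  exact ge_of_tendsto h2 (Eventually.of_forall step1)

end Aux2

/-- The infimal `f`-cost over Lipschitz paths in `D` joining `u` to `v`. -/
noncomputable def dfCost {d : ℕ} (D : Set (EuclideanSpace ℝ (Fin d)))
    (f : EuclideanSpace ℝ (Fin d) → EuclideanSpace ℝ (Fin d) → ℝ)
    (u v : EuclideanSpace ℝ (Fin d)) : ℝ :=
  sInf {c : ℝ | ∃ γ : ℝ → EuclideanSpace ℝ (Fin d),
    (∃ K : NNReal, LipschitzWith K γ) ∧ (∀ t ∈ Icc (0:ℝ) 1, γ t ∈ D) ∧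
    γ 0 = u ∧ γ 1 = v ∧ c = ∫ t in (0:ℝ)..1, f (γ t) (deriv γ t)}

lemma dfCost_set_bddBelow {d : ℕ} (D : Set (EuclideanSpace ℝ (Fin d)))
    (g : EuclideanSpace ℝ (Fin d) → EuclideanSpace ℝ (Fin d) → ℝ)
    (hg : ∀ x ∈ D, ∀ w, 0 ≤ g x w) (u v : EuclideanSpace ℝ (Fin d)) :
    BddBelow {c : ℝ | ∃ γ : ℝ → EuclideanSpace ℝ (Fin d),
      (∃ K : NNReal, LipschitzWith K γ) ∧ (∀ t ∈ Icc (0:ℝ) 1, γ t ∈ D) ∧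
      γ 0 = u ∧ γ 1 = v ∧ c = ∫ t in (0:ℝ)..1, g (γ t) (deriv γ t)} := by
  refine ⟨0, fun c hc => ?_⟩
  obtain ⟨γ, hK, hD, h0, h1, rfl⟩ := hc
  exact intervalIntegral.integral_nonneg zero_le_one fun t ht => hg _ (hD t ht) _

theorem stmt9 {d : ℕ} (hd : 2 ≤ d) (D : Set (EuclideanSpace ℝ (Fin d)))
    (hDcl : IsClosed D) (hDb : Bornology.IsBounded D) (hDconv : Convex ℝ D)
    (f : EuclideanSpace ℝ (Fin d) → EuclideanSpace ℝ (Fin d) → ℝ)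
    (hf : Continuous fun q : EuclideanSpace ℝ (Fin d) × EuclideanSpace ℝ (Fin d) => f q.1 q.2)
    (m₁ m₂ C : ℝ) (hm₁ : 0 < m₁) (hm₂ : 0 < m₂) (hC : 0 < C)
    -- ellipticity (p = 1):
    (hbound : ∀ x ∈ D, ∀ w : EuclideanSpace ℝ (Fin d),
      m₁ * ‖w‖ ≤ f x w ∧ f x w ≤ m₂ * ‖w‖)
    -- (Lip):
    (hLip : ∀ x ∈ D, ∀ y ∈ D, ∀ w : EuclideanSpace ℝ (Fin d),
      |f x w - f y w| ≤ C * ‖x - y‖ * ‖w‖)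
    -- (Hilb): for the frozen kernel `f x (·)`, straight lines are geodesics, with
    -- infimal cost `f x (v - u)`:
    (hHilb : ∀ x ∈ D, ∀ u ∈ D, ∀ v ∈ D,
      dfCost D (fun _ w => f x w) u v = f x (v - u)) :
    ∀ a ∈ D, ∀ b ∈ D, ‖b - a‖ ≤ 1 →
      |dfCost D f a b - f a (b - a)| ≤ C * (m₂ / m₁) ^ 2 * ‖b - a‖ ^ 2 := by
  intro a ha b hb hab1
  have hfnn : ∀ x ∈ D, ∀ w, 0 ≤ f x w := fun x hx w =>
    le_trans (by positivity) (hbound x hx w).1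
  have hbdd := dfCost_set_bddBelow D f hfnn a b
  have hbdda := dfCost_set_bddBelow D (fun _ w => f a w) (fun _ _ w => hfnn a ha w) a b
  -- m₁ ≤ m₂
  have hmle : m₁ ≤ m₂ := by
    have hw := hbound a ha (EuclideanSpace.single (⟨0, by omega⟩ : Fin d) (1:ℝ))
    rw [EuclideanSpace.norm_single] at hw
    simp only [norm_one, mul_one] at hw
    linarith [hw.1, hw.2]
  have hrat : 1 ≤ m₂ / m₁ := (one_le_div hm₁).2 hmle
  -- straight line
  set σ : ℝ → EuclideanSpace ℝ (Fin d) := fun t => a + t • (b - a) with hσ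
  have hσlip : LipschitzWith ‖b - a‖₊ σ := by
    refine LipschitzWith.of_dist_le_mul fun x y => ?_
    simp only [hσ, dist_eq_norm, Real.dist_eq]
    have hxy : a + x • (b - a) - (a + y • (b - a)) = (x - y) • (b - a) := by module
    rw [hxy, norm_smul, Real.norm_eq_abs, coe_nnnorm, mul_comm]
  have hσd : ∀ t, deriv σ t = b - a := by
    intro t
    have hh : HasDerivAt σ ((1:ℝ) • (b - a)) t :=
      ((hasDerivAt_id t).smul_const (b - a)).const_add a
    simpa using hh.deriv
  have hσD : ∀ t ∈ Icc (0:ℝ) 1, σ t ∈ D := by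
    intro t htm
    have hrw : σ t = (1 - t) • a + t • b := by simp only [hσ]; module
    rw [hrw]
    exact hDconv ha hb (by linarith [htm.2]) htm.1 (by ring)
  have hσ0 : σ 0 = a := by simp [hσ]
  have hσ1 : σ 1 = b := by simp [hσ]
  have hσmem : (∫ t in (0:ℝ)..1, f (σ t) (deriv σ t)) ∈
      {c : ℝ | ∃ γ : ℝ → EuclideanSpace ℝ (Fin d),
      (∃ K : NNReal, LipschitzWith K γ) ∧ (∀ t ∈ Icc (0:ℝ) 1, γ t ∈ D) ∧
      γ 0 = a ∧ γ 1 = b ∧ c = ∫ t in (0:ℝ)..1, f (γ t) (deriv γ t)} :=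
    ⟨σ, ⟨_, hσlip⟩, hσD, hσ0, hσ1, rfl⟩
  -- upper bound
  have hupper : dfCost D f a b ≤ f a (b - a) + C * ‖b - a‖ ^ 2 := by
    have hle := csInf_le hbdd hσmem
    simp only [hσd] at hle
    refine hle.trans ?_
    have hmono : (∫ t in (0:ℝ)..1, f (σ t) (b - a)) ≤
        ∫ _t in (0:ℝ)..1, (f a (b - a) + C * ‖b - a‖ ^ 2) := by
      apply intervalIntegral.integral_mono_on zero_le_one
      · exact (hf.comp (((continuous_const.add
          ((continuous_id.smul continuous_const))).prodMk continuous_const))).intervalIntegrable 0 1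
      · exact intervalIntegrable_const
      · intro x hx
        have hl := (abs_le.1 (hLip (σ x) (hσD x hx) a ha (b - a))).2
        have h2 : ‖σ x - a‖ ≤ ‖b - a‖ := by
          simp only [hσ, add_sub_cancel_left, norm_smul, Real.norm_eq_abs]
          calc |x| * ‖b - a‖ ≤ 1 * ‖b - a‖ := by
                gcongr
                rw [abs_of_nonneg hx.1]; exact hx.2
            _ = ‖b - a‖ := one_mul _
        have h3 : C * ‖σ x - a‖ * ‖b - a‖ ≤ C * ‖b - a‖ ^ 2 := by
          rw [pow_two]
          have := mul_le_mul_of_nonneg_right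
            (mul_le_mul_of_nonneg_left h2 hC.le) (norm_nonneg (b - a))
          linarith
        linarith
    rw [intervalIntegral.integral_const] at hmono
    simpa using hmono
  -- lower bound on every element
  have hlower : ∀ c ∈ {c : ℝ | ∃ γ : ℝ → EuclideanSpace ℝ (Fin d),
      (∃ K : NNReal, LipschitzWith K γ) ∧ (∀ t ∈ Icc (0:ℝ) 1, γ t ∈ D) ∧
      γ 0 = a ∧ γ 1 = b ∧ c = ∫ t in (0:ℝ)..1, f (γ t) (deriv γ t)},
      f a (b - a) - C * (m₂ / m₁) ^ 2 * ‖b - a‖ ^ 2 ≤ c := by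
    rintro c ⟨γ, ⟨K, hK⟩, hγD, h0, h1, rfl⟩
    set c := ∫ t in (0:ℝ)..1, f (γ t) (deriv γ t) with hcdef
    set L := ∫ t in (0:ℝ)..1, ‖deriv γ t‖ with hLdef
    have hKb : ∀ t, ‖deriv γ t‖ ≤ K := lip_norm_deriv_le hK
    have hmg : Measurable (deriv γ) := measurable_deriv γ
    have intNorm : IntervalIntegrable (fun t => ‖deriv γ t‖) volume 0 1 := by
      rw [intervalIntegrable_iff, uIoc_of_le zero_le_one]
      refine Integrable.mono' (g := fun _ => (K:ℝ))
        (integrableOn_const measure_Ioc_lt_top.ne)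
        hmg.norm.aestronglyMeasurable ?_
      filter_upwards with t
      simpa [abs_of_nonneg (norm_nonneg _)] using hKb t
    have hmF : Measurable fun t => f (γ t) (deriv γ t) :=
      hf.measurable.comp ((hK.continuous.measurable).prodMk hmg)
    have hmFa : Measurable fun t => f a (deriv γ t) :=
      hf.measurable.comp (measurable_const.prodMk hmg)
    have intF : IntervalIntegrable (fun t => f (γ t) (deriv γ t)) volume 0 1 := by
      rw [intervalIntegrable_iff, uIoc_of_le zero_le_one]
      refine Integrable.mono' (g := fun _ => m₂ * K)
        (integrableOn_const measure_Ioc_lt_top.ne) hmF.aestronglyMeasurable ?_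
      rw [ae_restrict_iff' measurableSet_Ioc]
      filter_upwards with t ht
      have htmem : γ t ∈ D := hγD t ⟨ht.1.le, ht.2⟩
      rw [Real.norm_eq_abs, abs_of_nonneg (hfnn _ htmem _)]
      refine (hbound _ htmem _).2.trans ?_
      exact mul_le_mul_of_nonneg_left (hKb t) hm₂.le
    have intFa : IntervalIntegrable (fun t => f a (deriv γ t)) volume 0 1 := by
      rw [intervalIntegrable_iff, uIoc_of_le zero_le_one]
      refine Integrable.mono' (g := fun _ => m₂ * K)
        (integrableOn_const measure_Ioc_lt_top.ne) hmFa.aestronglyMeasurable ?_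
      filter_upwards with t
      rw [Real.norm_eq_abs, abs_of_nonneg (hfnn a ha _)]
      exact (hbound a ha _).2.trans (mul_le_mul_of_nonneg_left (hKb t) hm₂.le)
    have hca : f a (b - a) ≤ ∫ t in (0:ℝ)..1, f a (deriv γ t) := by
      rw [← hHilb a ha a ha b hb]
      exact csInf_le hbdda ⟨γ, ⟨K, hK⟩, hγD, h0, h1, rfl⟩
    have hm1L : m₁ * L ≤ c := by
      have hmono : (∫ t in (0:ℝ)..1, m₁ * ‖deriv γ t‖) ≤ c := by
        apply intervalIntegral.integral_mono_on zero_le_one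
          (intNorm.const_mul m₁) intF
        intro t ht
        exact (hbound _ (hγD t ht) _).1
      rwa [intervalIntegral.integral_const_mul] at hmono
    have hLnn : (0:ℝ) ≤ L :=
      intervalIntegral.integral_nonneg zero_le_one fun _ _ => norm_nonneg _
    by_cases hcase : m₂ * ‖b - a‖ ≤ c
    · have h5 : f a (b - a) ≤ m₂ * ‖b - a‖ := by
        simpa using (hbound a ha (b - a)).2
      have h6 : (0:ℝ) ≤ C * (m₂ / m₁) ^ 2 * ‖b - a‖ ^ 2 := by positivity
      linarith
    · push_neg at hcase
      set R := m₂ / m₁ * ‖b - a‖ with hRdef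
      have hRnn : 0 ≤ R := by positivity
      have hLle : L ≤ R := by
        rw [hRdef, div_mul_eq_mul_div, le_div_iff₀ hm₁]
        nlinarith
      have hdist : ∀ t ∈ Icc (0:ℝ) 1, ‖γ t - a‖ ≤ R := by
        intro t htm
        have h4 : ‖γ t - γ 0‖ ≤ ∫ s in (0:ℝ)..t, ‖deriv γ s‖ :=
          lip_norm_sub_le_integral hK htm.1
        have h5 : (∫ s in (0:ℝ)..t, ‖deriv γ s‖) ≤ L := by
          apply intervalIntegral.integral_mono_interval le_rfl htm.1 htm.2
          · filter_upwards with s using norm_nonneg _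
          · exact intNorm
        rw [h0] at h4
        linarith
      have hcomp : (∫ t in (0:ℝ)..1, (f a (deriv γ t) - C * R * ‖deriv γ t‖)) ≤ c := by
        apply intervalIntegral.integral_mono_on zero_le_one
          (intFa.sub (intNorm.const_mul (C * R))) intF
        intro t htm
        have hl := (abs_le.1 (hLip a ha (γ t) (hγD t htm) (deriv γ t))).2
        have h6 : ‖a - γ t‖ ≤ R := by rw [norm_sub_rev]; exact hdist t htm
        have h7 : C * ‖a - γ t‖ * ‖deriv γ t‖ ≤ C * R * ‖deriv γ t‖ := by
          have := mul_le_mul_of_nonneg_right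
            (mul_le_mul_of_nonneg_left h6 hC.le) (norm_nonneg (deriv γ t))
          linarith
        linarith
      have hsub : (∫ t in (0:ℝ)..1, (f a (deriv γ t) - C * R * ‖deriv γ t‖))
          = (∫ t in (0:ℝ)..1, f a (deriv γ t)) - C * R * L := by
        rw [intervalIntegral.integral_sub intFa (intNorm.const_mul (C * R)),
          intervalIntegral.integral_const_mul]
      have hfin : C * R * L ≤ C * (m₂ / m₁) ^ 2 * ‖b - a‖ ^ 2 := by
        have h8 : R * L ≤ R * R := mul_le_mul_of_nonneg_left hLle hRnn
        have h9 : C * (R * L) ≤ C * (R * R) := mul_le_mul_of_nonneg_left h8 hC.le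
        calc C * R * L = C * (R * L) := by ring
          _ ≤ C * (R * R) := h9
          _ = C * (m₂ / m₁) ^ 2 * ‖b - a‖ ^ 2 := by rw [hRdef]; ring
      rw [hsub] at hcomp
      linarith
  have hlow := le_csInf ⟨_, hσmem⟩ hlower
  rw [abs_le]
  constructor
  · unfold dfCost at hlow ⊢
    linarith
  · have h9 : C * ‖b - a‖ ^ 2 ≤ C * (m₂ / m₁) ^ 2 * ‖b - a‖ ^ 2 := by
      have h10 : (1:ℝ) ≤ (m₂ / m₁) ^ 2 := by nlinarith
      have h11 : ‖b - a‖ ^ 2 ≤ (m₂ / m₁) ^ 2 * ‖b - a‖ ^ 2 :=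
        le_mul_of_one_le_left (sq_nonneg _) h10
      calc C * ‖b - a‖ ^ 2 ≤ C * ((m₂ / m₁) ^ 2 * ‖b - a‖ ^ 2) :=
            mul_le_mul_of_nonneg_left h11 hC.le
        _ = C * (m₂ / m₁) ^ 2 * ‖b - a‖ ^ 2 := by ring
    linarith
end

section
/- Let D ⊂ ℝ^d be closed bounded convex, {X_i} ⊂ D, and R_n = sup_{y∈D} min_{1≤i≤n}|X_i − y|. Fix n and suppose 3R_n < ε_n. Then any two points v₁, v₂ ∈ {X_1,…,X_n} ∪ {a,b} are connected by a path in the ε_n-graph G_n(a,b) on vertex set {X_1,…,X_n} ∪ {a,b}, where u ~ v iff 0 < |u−v| < ε_n. -/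
open Set

private lemma key_path {E : Type*} [NormedAddCommGroup E] [NormedSpace ℝ E]
    (D : Set E) (hDconv : Convex ℝ D) (V : Set E) (hVD : V ⊆ D)
    (R ε : ℝ) (hR0 : 0 ≤ R) (hRε : 3 * R < ε)
    (hcover : ∀ y ∈ D, ∃ x ∈ V, dist x y ≤ R) :
    ∀ m : ℕ, ∀ u ∈ V, ∀ v ∈ V, dist u v < ε + m * ((ε - 3 * R) / 2) →
      ∃ (k : ℕ) (w : Fin (k + 1) → E),
        w 0 = u ∧ w (Fin.last k) = v ∧ (∀ j, w j ∈ V) ∧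
        (∀ j : Fin k, 0 < ‖w j.succ - w j.castSucc‖ ∧ ‖w j.succ - w j.castSucc‖ < ε) := by
  have hε : 0 < ε := lt_of_le_of_lt (by linarith) hRε
  have hc : 0 < (ε - 3 * R) / 2 := by linarith
  intro m
  induction m with
  | zero =>
    intro u hu v hv hd
    simp only [Nat.cast_zero, zero_mul, add_zero] at hd
    by_cases huv : u = v
    · subst huv
      exact ⟨0, fun _ => u, rfl, rfl, fun _ => hu, fun j => j.elim0⟩
    · refine ⟨1, Fin.cons u (fun _ => v), Fin.cons_zero _ _, ?_, ?_, ?_⟩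
      · rw [← Fin.succ_last, Fin.cons_succ]
      · intro j
        induction j using Fin.cases with
        | zero => simpa using hu
        | succ i => simpa using hv
      · intro j
        have h0 : (Fin.cons u (fun _ => v) : Fin 2 → E) ((0 : Fin 1).succ) = v :=
          Fin.cons_succ _ _ _
        have hj : j = 0 := Subsingleton.elim _ _
        rw [hj, Fin.castSucc_zero, h0, Fin.cons_zero]
        constructor
        · simpa [norm_pos_iff, sub_ne_zero] using (Ne.symm huv)
        · simpa [← dist_eq_norm, dist_comm] using hd
  | succ m ih =>
    intro u hu v hv hd
    by_cases hd' : dist u v < ε + m * ((ε - 3 * R) / 2)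
    · exact ih u hu v hv hd'
    push_neg at hd'
    have hdu : (0:ℝ) < dist u v := by
      have : (0:ℝ) ≤ m * ((ε - 3 * R) / 2) := by positivity
      linarith
    set s : ℝ := ε - 2 * R - (ε - 3 * R) / 2 with hs
    have hs0 : 0 < s := by simp only [hs]; linarith
    have hsdu : s ≤ dist u v := by
      have : (0:ℝ) ≤ m * ((ε - 3 * R) / 2) := by positivity
      simp only [hs]; linarith
    set t : ℝ := s / dist u v with ht
    have ht0 : 0 < t := div_pos hs0 hdu
    have ht1 : t ≤ 1 := (div_le_one hdu).2 hsdu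
    set p : E := (1 - t) • u + t • v with hp
    have hpD : p ∈ D := hDconv (hVD hu) (hVD hv) (by linarith) (le_of_lt ht0) (by ring)
    obtain ⟨x, hxV, hxp⟩ := hcover p hpD
    have hpu : p - u = t • (v - u) := by rw [hp]; module
    have hvp : v - p = (1 - t) • (v - u) := by rw [hp]; module
    have hnorm : ‖v - u‖ = dist u v := by rw [← dist_eq_norm, dist_comm]
    have hdup : dist u p = s := by
      rw [dist_comm, dist_eq_norm, hpu, norm_smul, Real.norm_eq_abs,
        abs_of_pos ht0, hnorm, ht, div_mul_cancel₀ _ hdu.ne']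
    have hdpv : dist p v = dist u v - s := by
      rw [dist_comm, dist_eq_norm, hvp, norm_smul, Real.norm_eq_abs,
        abs_of_nonneg (by linarith), hnorm, ht, sub_mul, one_mul,
        div_mul_cancel₀ _ hdu.ne']
    have hux : dist u x < ε := by
      have h1 : dist u x ≤ dist u p + dist p x := dist_triangle _ _ _
      rw [dist_comm p x] at h1
      simp only [hs] at hdup
      linarith
    have huxpos : 0 < dist u x := by
      have h1 : dist u p ≤ dist u x + dist x p := dist_triangle _ _ _
      simp only [hs] at hdup
      linarith
    have hxv : dist x v < ε + m * ((ε - 3 * R) / 2) := by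
      have h1 : dist x v ≤ dist x p + dist p v := dist_triangle _ _ _
      have hd2 : dist u v < ε + (m + 1 : ℕ) * ((ε - 3 * R) / 2) := hd
      push_cast at hd2
      simp only [hs] at hdpv
      linarith
    obtain ⟨k, w, hw0, hwl, hwV, hwE⟩ := ih x hxV v hv hxv
    refine ⟨k + 1, Fin.cons u w, Fin.cons_zero _ _, ?_, ?_, ?_⟩
    · rw [← Fin.succ_last, Fin.cons_succ]; exact hwl
    · intro j
      induction j using Fin.cases with
      | zero => simpa using hu
      | succ i => simpa using hwV i
    · intro j
      induction j using Fin.cases with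
      | zero =>
        have h0 : (Fin.cons u w : Fin (k+2) → E) ((0 : Fin (k+1)).succ) = w 0 :=
          Fin.cons_succ _ _ _
        rw [Fin.castSucc_zero, h0, Fin.cons_zero, hw0, ← dist_eq_norm, dist_comm]
        exact ⟨huxpos, hux⟩
      | succ i =>
        have h1 : (Fin.cons u w : Fin (k+2) → E) ((i.succ).succ) = w i.succ :=
          Fin.cons_succ _ _ _
        have h2 : (Fin.cons u w : Fin (k+2) → E) ((i.succ).castSucc) = w i.castSucc := by
          rw [← Fin.succ_castSucc, Fin.cons_succ]
        rw [h1, h2]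
        exact hwE i

theorem stmt14 {d : ℕ} (D : Set (EuclideanSpace ℝ (Fin d)))
    (hDcl : IsClosed D) (hDb : Bornology.IsBounded D) (hDconv : Convex ℝ D)
    (n : ℕ) (X : Fin n → EuclideanSpace ℝ (Fin d)) (hX : ∀ i, X i ∈ D)
    (a b : EuclideanSpace ℝ (Fin d)) (ha : a ∈ D) (hb : b ∈ D)
    (R ε : ℝ) (hR0 : 0 ≤ R)
    -- `R` dominates the covering radius `R_n = sup_{y ∈ D} min_i |X_i - y|`:
    (hcover : ∀ y ∈ D, ∃ i : Fin n, dist (X i) y ≤ R)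
    (hRε : 3 * R < ε) :
    ∀ v₁ ∈ insert a (insert b (range X)), ∀ v₂ ∈ insert a (insert b (range X)),
      ∃ (k : ℕ) (w : Fin (k + 1) → EuclideanSpace ℝ (Fin d)),
        w 0 = v₁ ∧ w (Fin.last k) = v₂ ∧
        (∀ j, w j ∈ insert a (insert b (range X))) ∧
        (∀ j : Fin k, 0 < ‖w j.succ - w j.castSucc‖ ∧ ‖w j.succ - w j.castSucc‖ < ε) := by
  set V : Set (EuclideanSpace ℝ (Fin d)) := insert a (insert b (range X)) with hV
  have hVD : V ⊆ D := by
    rintro x (rfl | rfl | ⟨i, rfl⟩)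
    · exact ha
    · exact hb
    · exact hX i
  have hcover' : ∀ y ∈ D, ∃ x ∈ V, dist x y ≤ R := by
    intro y hy
    obtain ⟨i, hi⟩ := hcover y hy
    exact ⟨X i, by simp [hV], hi⟩
  intro v₁ hv₁ v₂ hv₂
  have hc : 0 < (ε - 3 * R) / 2 := by linarith
  obtain ⟨m, hm⟩ := exists_nat_gt (dist v₁ v₂ / ((ε - 3 * R) / 2))
  have hε : 0 < ε := lt_of_le_of_lt (by linarith) hRε
  have hdm : dist v₁ v₂ < ε + m * ((ε - 3 * R) / 2) := by
    have := (div_lt_iff₀ hc).1 hm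
    linarith
  exact key_path D hDconv V hVD R ε hR0 hRε hcover' m v₁ hv₁ v₂ hv₂ hdm
end

section
/- Suppose f satisfies the Lipschitz condition |f(x,v) − f(y,v)| ≤ c|x−y||v|^p and homogeneity f(x,λv) = λ^p f(x,v) for λ > 0, with p ≥ 1. For any path v = (v_0,…,v_m) with |v_{i+1} − v_i| ≤ ε for all i, letting L(v) = m^{p−1} Σ_{i=0}^{m−1} ∫₀¹ f(v_i + t(v_{i+1}−v_i), v_{i+1}−v_i) dt and H(v) = (1/m) Σ_{i=0}^{m−1} f(v_i, m(v_{i+1}−v_i)), one has |L(v) − H(v)| ≤ c ε m^{p−1} Σ_{i=0}^{m−1} |v_{i+1}−v_i|^p. If moreover m₁|v|^p ≤ f(x,v), then |L(v) − H(v)| ≤ (c/m₁) ε min(L(v), H(v)). -/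
open MeasureTheory Set

theorem stmt15 {d : ℕ}
    (f : EuclideanSpace ℝ (Fin d) → EuclideanSpace ℝ (Fin d) → ℝ)
    (p : ℝ) (hp : 1 ≤ p)
    -- (Lip):
    (c : ℝ) (hc : 0 < c)
    (hLip : ∀ x y (w : EuclideanSpace ℝ (Fin d)),
      |f x w - f y w| ≤ c * ‖x - y‖ * ‖w‖ ^ p)
    -- p-homogeneity:
    (hhom : ∀ x (w : EuclideanSpace ℝ (Fin d)) (lam : ℝ), 0 < lam →
      f x (lam • w) = lam ^ p * f x w)
    (m₁ : ℝ) (hm₁ : 0 < m₁)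
    (hlower : ∀ x w : EuclideanSpace ℝ (Fin d), m₁ * ‖w‖ ^ p ≤ f x w)
    (ε : ℝ) (hε : 0 < ε)
    (m : ℕ) (hm : 1 ≤ m) (v : Fin (m + 1) → EuclideanSpace ℝ (Fin d))
    (hstep : ∀ i : Fin m, ‖v i.succ - v i.castSucc‖ ≤ ε)
    (L H : ℝ)
    (hL : L = (m : ℝ) ^ (p - 1) * ∑ i : Fin m,
      ∫ t in (0:ℝ)..1, f (v i.castSucc + t • (v i.succ - v i.castSucc)) (v i.succ - v i.castSucc))
    (hH : H = (1 / (m : ℝ)) * ∑ i : Fin m, f (v i.castSucc) ((m : ℝ) • (v i.succ - v i.castSucc))) :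
    |L - H| ≤ c * ε * (m : ℝ) ^ (p - 1) * ∑ i : Fin m, ‖v i.succ - v i.castSucc‖ ^ p ∧
    |L - H| ≤ (c / m₁) * ε * min L H := by
  have hmpos : (0:ℝ) < (m : ℝ) := by exact_mod_cast hm
  set Δ : Fin m → EuclideanSpace ℝ (Fin d) := fun i => v i.succ - v i.castSucc with hΔ
  set g : Fin m → ℝ := fun i => ∫ t in (0:ℝ)..1, f (v i.castSucc + t • Δ i) (Δ i) with hg
  have hMp : (0:ℝ) ≤ (m : ℝ) ^ (p - 1) := Real.rpow_nonneg (le_of_lt hmpos) _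
  -- continuity along each segment
  have hcont : ∀ i : Fin m, Continuous (fun t : ℝ => f (v i.castSucc + t • Δ i) (Δ i)) := by
    intro i
    have hlip : LipschitzWith (Real.toNNReal (c * ‖Δ i‖ * ‖Δ i‖ ^ p))
        (fun t : ℝ => f (v i.castSucc + t • Δ i) (Δ i)) := by
      apply LipschitzWith.of_dist_le_mul
      intro s t
      have h1 := hLip (v i.castSucc + s • Δ i) (v i.castSucc + t • Δ i) (Δ i)
      have h2 : (v i.castSucc + s • Δ i) - (v i.castSucc + t • Δ i) = (s - t) • Δ i := by
        module
      rw [h2, norm_smul] at h1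
      have h3 : ((Real.toNNReal (c * ‖Δ i‖ * ‖Δ i‖ ^ p)) : ℝ) = c * ‖Δ i‖ * ‖Δ i‖ ^ p := by
        rw [Real.coe_toNNReal]
        positivity
      rw [Real.dist_eq, Real.dist_eq, h3]
      calc |f (v i.castSucc + s • Δ i) (Δ i) - f (v i.castSucc + t • Δ i) (Δ i)|
          ≤ c * (‖s - t‖ * ‖Δ i‖) * ‖Δ i‖ ^ p := h1
        _ = c * ‖Δ i‖ * ‖Δ i‖ ^ p * |s - t| := by rw [Real.norm_eq_abs]; ring
    exact hlip.continuous
  have hint : ∀ i : Fin m,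
      IntervalIntegrable (fun t : ℝ => f (v i.castSucc + t • Δ i) (Δ i)) volume 0 1 :=
    fun i => (hcont i).intervalIntegrable 0 1
  -- segment estimate
  have hkey : ∀ i : Fin m, |g i - f (v i.castSucc) (Δ i)| ≤ c * ε * ‖Δ i‖ ^ p := by
    intro i
    have hsub : g i - f (v i.castSucc) (Δ i)
        = ∫ t in (0:ℝ)..1, (f (v i.castSucc + t • Δ i) (Δ i) - f (v i.castSucc) (Δ i)) := by
      rw [intervalIntegral.integral_sub (hint i) (intervalIntegrable_const)]
      simp [hg]
    rw [hsub]
    have := intervalIntegral.norm_integral_le_of_norm_le_const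
      (C := c * ε * ‖Δ i‖ ^ p) (a := (0:ℝ)) (b := 1)
      (f := fun t => f (v i.castSucc + t • Δ i) (Δ i) - f (v i.castSucc) (Δ i)) ?_
    · simpa using this
    · intro t ht
      rw [uIoc_of_le (by norm_num : (0:ℝ) ≤ 1)] at ht
      have h1 := hLip (v i.castSucc + t • Δ i) (v i.castSucc) (Δ i)
      have h2 : (v i.castSucc + t • Δ i) - v i.castSucc = t • Δ i := by module
      rw [h2, norm_smul] at h1
      rw [Real.norm_eq_abs]
      refine h1.trans ?_
      have ht1 : |t| ≤ 1 := by
        rw [abs_of_pos ht.1]; exact ht.2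
      have : ‖t‖ * ‖Δ i‖ ≤ 1 * ε := by
        apply mul_le_mul _ (hstep i) (norm_nonneg _) zero_le_one
        rw [Real.norm_eq_abs]; exact ht1
      rw [one_mul] at this
      have hppos : (0:ℝ) ≤ ‖Δ i‖ ^ p := Real.rpow_nonneg (norm_nonneg _) _
      exact mul_le_mul_of_nonneg_right (mul_le_mul_of_nonneg_left this hc.le) hppos
  -- rewrite H
  have hH' : H = (m : ℝ) ^ (p - 1) * ∑ i : Fin m, f (v i.castSucc) (Δ i) := by
    rw [hH]
    have : ∀ i : Fin m, f (v i.castSucc) ((m : ℝ) • Δ i) = (m : ℝ) ^ p * f (v i.castSucc) (Δ i) :=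
      fun i => hhom _ _ _ hmpos
    rw [Finset.sum_congr rfl (fun i _ => this i), ← Finset.mul_sum]
    rw [Real.rpow_sub hmpos, Real.rpow_one]
    field_simp
  have hLH : L - H = (m : ℝ) ^ (p - 1) * ∑ i : Fin m, (g i - f (v i.castSucc) (Δ i)) := by
    rw [hL, hH', Finset.sum_sub_distrib, mul_sub]
  -- first bound
  have hbound1 : |L - H| ≤ c * ε * (m : ℝ) ^ (p - 1) * ∑ i : Fin m, ‖Δ i‖ ^ p := by
    rw [hLH, abs_mul, abs_of_nonneg hMp]
    calc (m : ℝ) ^ (p - 1) * |∑ i : Fin m, (g i - f (v i.castSucc) (Δ i))|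
        ≤ (m : ℝ) ^ (p - 1) * ∑ i : Fin m, |g i - f (v i.castSucc) (Δ i)| := by
          gcongr; exact Finset.abs_sum_le_sum_abs _ _
      _ ≤ (m : ℝ) ^ (p - 1) * ∑ i : Fin m, (c * ε * ‖Δ i‖ ^ p) := by
          gcongr with i; exact hkey i
      _ = c * ε * (m : ℝ) ^ (p - 1) * ∑ i : Fin m, ‖Δ i‖ ^ p := by
          rw [← Finset.mul_sum]; ring
  refine ⟨hbound1, ?_⟩
  -- lower bounds on L and H
  set S : ℝ := ∑ i : Fin m, ‖Δ i‖ ^ p with hS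
  have hSnonneg : 0 ≤ S :=
    Finset.sum_nonneg fun i _ => Real.rpow_nonneg (norm_nonneg _) _
  have hHlow : m₁ * ((m : ℝ) ^ (p - 1) * S) ≤ H := by
    calc m₁ * ((m : ℝ) ^ (p - 1) * S) = (m : ℝ) ^ (p - 1) * ∑ i : Fin m, m₁ * ‖Δ i‖ ^ p := by
          rw [← Finset.mul_sum]; ring
      _ ≤ (m : ℝ) ^ (p - 1) * ∑ i : Fin m, f (v i.castSucc) (Δ i) := by
          gcongr with i; exact hlower _ _
      _ = H := hH'.symm
  have hLlow : m₁ * ((m : ℝ) ^ (p - 1) * S) ≤ L := by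
    rw [hL]
    have hgi : ∀ i : Fin m, m₁ * ‖Δ i‖ ^ p ≤ g i := by
      intro i
      have : m₁ * ‖Δ i‖ ^ p = ∫ _ in (0:ℝ)..1, m₁ * ‖Δ i‖ ^ p := by simp
      rw [hg, this]
      apply intervalIntegral.integral_mono_on (by norm_num) intervalIntegrable_const (hint i)
      intro t _
      exact hlower _ _
    calc m₁ * ((m : ℝ) ^ (p - 1) * S) = (m : ℝ) ^ (p - 1) * ∑ i : Fin m, m₁ * ‖Δ i‖ ^ p := by
          rw [← Finset.mul_sum]; ring
      _ ≤ (m : ℝ) ^ (p - 1) * ∑ i : Fin m, g i := by gcongr with i; exact hgi i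
  have hmin : m₁ * ((m : ℝ) ^ (p - 1) * S) ≤ min L H := le_min hLlow hHlow
  calc |L - H| ≤ c * ε * (m : ℝ) ^ (p - 1) * S := hbound1
    _ = (c / m₁) * ε * (m₁ * ((m : ℝ) ^ (p - 1) * S)) := by field_simp
    _ ≤ (c / m₁) * ε * min L H := by
        have h0 : 0 ≤ (c / m₁) * ε := by positivity
        exact mul_le_mul_of_nonneg_left hmin h0
end

section
/- Suppose m₁|v| ≤ f(x,v) ≤ m₂|v| for all x, v (the p = 1 ellipticity), and let w = (w_0,…,w_m) be any discrete path minimizing H(w) = Σ_{k} f(w_k, w_{k+1}−w_k) over paths in a graph in which any two vertices at Euclidean distance less than ε are adjacent. Then for any indices i < j with |w_i − w_j| < ε, all intermediate vertices satisfy w_k ∈ B(w_i, 2(m₂/m₁)ε) for i ≤ k ≤ j. -/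
open Set

/-- The Riemann-sum cost of a discrete path. -/
noncomputable def Hsum {d : ℕ}
    (f : EuclideanSpace ℝ (Fin d) → EuclideanSpace ℝ (Fin d) → ℝ)
    (m : ℕ) (w : Fin (m + 1) → EuclideanSpace ℝ (Fin d)) : ℝ :=
  ∑ k : Fin m, f (w k.castSucc) (w k.succ - w k.castSucc)

lemma hsum_eq_sum_range {d : ℕ}
    (f : EuclideanSpace ℝ (Fin d) → EuclideanSpace ℝ (Fin d) → ℝ)
    (m : ℕ) (w : Fin (m + 1) → EuclideanSpace ℝ (Fin d)) (C : ℕ → ℝ)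
    (hC : ∀ k : Fin m, f (w k.castSucc) (w k.succ - w k.castSucc) = C k.val) :
    Hsum f m w = ∑ k ∈ Finset.range m, C k := by
  rw [Hsum, ← Fin.sum_univ_eq_sum_range C m]
  exact Finset.sum_congr rfl fun k _ => hC k

theorem stmt16 {d : ℕ}
    (f : EuclideanSpace ℝ (Fin d) → EuclideanSpace ℝ (Fin d) → ℝ)
    (m₁ m₂ : ℝ) (hm₁ : 0 < m₁) (hm₂ : 0 < m₂)
    -- `p = 1` ellipticity:
    (hbound : ∀ x w : EuclideanSpace ℝ (Fin d), m₁ * ‖w‖ ≤ f x w ∧ f x w ≤ m₂ * ‖w‖)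
    (V : Set (EuclideanSpace ℝ (Fin d))) (ε : ℝ) (hε : 0 < ε)
    (m : ℕ) (w : Fin (m + 1) → EuclideanSpace ℝ (Fin d))
    (hwV : ∀ j, w j ∈ V)
    (hwadj : ∀ j : Fin m, 0 < ‖w j.succ - w j.castSucc‖ ∧ ‖w j.succ - w j.castSucc‖ < ε)
    -- `w` minimizes the Riemann-sum cost over all graph paths in `V` (vertices at
    -- Euclidean distance less than `ε` are adjacent) with the same endpoints:
    (hmin : ∀ (m' : ℕ) (u : Fin (m' + 1) → EuclideanSpace ℝ (Fin d)),
      (∀ j, u j ∈ V) → u 0 = w 0 → u (Fin.last m') = w (Fin.last m) →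
      (∀ j : Fin m', 0 < ‖u j.succ - u j.castSucc‖ ∧ ‖u j.succ - u j.castSucc‖ < ε) →
      Hsum f m w ≤ Hsum f m' u) :
    ∀ i j k : Fin (m + 1), i ≤ k → k ≤ j → ‖w i - w j‖ < ε →
      ‖w k - w i‖ ≤ 2 * (m₂ / m₁) * ε := by
  intro i j k hik hkj hij
  rcases eq_or_lt_of_le (hik.trans hkj) with hij' | hij'
  · -- degenerate case i = j, hence k = i
    have hk : k = i := le_antisymm (hij' ▸ hkj) hik
    rw [hk, sub_self, norm_zero]
    positivity
  -- now i < j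
  have hab : (i : ℕ) < (j : ℕ) := hij'
  set a := (i : ℕ) with ha
  set b := (j : ℕ) with hb
  have hbm : b ≤ m := Nat.lt_succ_iff.mp j.isLt
  set W : ℕ → EuclideanSpace ℝ (Fin d) := fun n => w ⟨min n m, by omega⟩ with hW
  have hWle : ∀ n (hn : n ≤ m), W n = w ⟨n, Nat.lt_succ_of_le hn⟩ := by
    intro n hn
    simp only [hW]
    exact congrArg w (Fin.ext (Nat.min_eq_left hn))
  set c : ℕ → ℝ := fun n => f (W n) (W (n + 1) - W n) with hc
  have hWi : W a = w i := by rw [hWle a (by omega)]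
  have hWj : W b = w j := by rw [hWle b hbm]
  have hWk : W (k : ℕ) = w k := by rw [hWle (k : ℕ) (Nat.lt_succ_iff.mp k.isLt)]
  have hedge : ∀ n, n < m → 0 < ‖W (n + 1) - W n‖ ∧ ‖W (n + 1) - W n‖ < ε := by
    intro n hn
    have h1 : W n = w (Fin.castSucc ⟨n, hn⟩) := by
      rw [hWle n hn.le]; exact congrArg w (Fin.ext rfl)
    have h2 : W (n + 1) = w (Fin.succ ⟨n, hn⟩) := by
      rw [hWle (n + 1) hn]; exact congrArg w (Fin.ext rfl)
    rw [h1, h2]; exact hwadj ⟨n, hn⟩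
  have hHw : Hsum f m w = ∑ l ∈ Finset.range m, c l := by
    apply hsum_eq_sum_range
    intro l
    show _ = f (W l.1) (W (l.1 + 1) - W l.1)
    rw [hWle l.1 (le_of_lt l.isLt), hWle (l.1 + 1) l.isLt]
    rfl
  set t := m - b with ht
  have hHw3 : Hsum f m w = (∑ l ∈ Finset.range a, c l)
      + (∑ l ∈ Finset.range (b - a), c (a + l)) + ∑ l ∈ Finset.range t, c (b + l) := by
    rw [hHw, show m = a + (b - a) + t from by omega, Finset.sum_range_add,
      Finset.sum_range_add]
    congr 1
    exact Finset.sum_congr rfl fun l _ => by congr 1; omega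
  -- key inequality: the cost of the segment from i to j is at most m₂ ‖w i - w j‖
  have hkey : ∑ l ∈ Finset.range (b - a), c (a + l) ≤ m₂ * ‖w i - w j‖ := by
    by_cases hwij : w i = w j
    · -- deletion construction: removing the loop strictly decreases the cost
      exfalso
      set s := b - a with hs
      set m' := a + t with hm'
      set U : ℕ → EuclideanSpace ℝ (Fin d) :=
        fun n => if n ≤ a then W n else W (n + s) with hU
      set u : Fin (m' + 1) → EuclideanSpace ℝ (Fin d) := fun l => U l.1 with hu
      have hUval : ∀ n, a ≤ n → U n = W (n + s) := by
        intro n hn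
        rcases eq_or_lt_of_le hn with h | h
        · simp only [hU]
          rw [if_pos (by omega : n ≤ a), ← h]
          rw [show a + s = b from by omega, hWi, hWj, hwij]
        · simp only [hU]; rw [if_neg (by omega)]
      have hUlt : ∀ n, n ≤ a → U n = W n := by
        intro n hn; simp only [hU]; rw [if_pos hn]
      have hadj : ∀ l : Fin m', 0 < ‖u l.succ - u l.castSucc‖ ∧
          ‖u l.succ - u l.castSucc‖ < ε := by
        intro l
        have hl : l.1 < m' := l.isLt
        show 0 < ‖U (l.1 + 1) - U l.1‖ ∧ ‖U (l.1 + 1) - U l.1‖ < ε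
        rcases lt_or_ge l.1 a with h | h
        · rw [hUlt l.1 (by omega), hUlt (l.1 + 1) (by omega)]
          exact hedge l.1 (by omega)
        · rw [hUval l.1 h, hUval (l.1 + 1) (by omega),
            show l.1 + 1 + s = l.1 + s + 1 from by omega]
          exact hedge (l.1 + s) (by omega)
      have hmem : ∀ l, u l ∈ V := by
        intro l
        show U l.1 ∈ V
        simp only [hU, hW]
        split <;> exact hwV _
      have h0 : u 0 = w 0 := by
        show U 0 = w 0
        rw [hUlt 0 (by omega), hWle 0 (by omega)]
        exact congrArg w (Fin.ext rfl)
      have hlast : u (Fin.last m') = w (Fin.last m) := by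
        show U m' = w (Fin.last m)
        rw [hUval m' (by omega), show m' + s = m from by omega, hWle m le_rfl]
        exact congrArg w (Fin.ext rfl)
      set Cu : ℕ → ℝ := fun n => if n < a then c n else c (n + s) with hCu
      have hHu : Hsum f m' u = ∑ l ∈ Finset.range m', Cu l := by
        apply hsum_eq_sum_range
        intro l
        show f (U l.1) (U (l.1 + 1) - U l.1) = Cu l.1
        rcases lt_or_ge l.1 a with h | h
        · rw [hUlt l.1 (by omega), hUlt (l.1 + 1) (by omega)]
          simp only [hCu]; rw [if_pos h]
        · rw [hUval l.1 h, hUval (l.1 + 1) (by omega),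
            show l.1 + 1 + s = l.1 + s + 1 from by omega]
          simp only [hCu]; rw [if_neg (by omega)]
      have hHu2 : Hsum f m' u = (∑ l ∈ Finset.range a, c l)
          + ∑ l ∈ Finset.range t, c (b + l) := by
        rw [hHu, hm', Finset.sum_range_add]
        congr 1
        · exact Finset.sum_congr rfl fun l hl => by
            simp only [hCu]; rw [if_pos (Finset.mem_range.mp hl)]
        · exact Finset.sum_congr rfl fun l _ => by
            simp only [hCu]; rw [if_neg (by omega)]; congr 1; omega
      have hle := hmin m' u hmem h0 hlast hadj
      rw [hHw3, hHu2] at hle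
      have hpos : 0 < ∑ l ∈ Finset.range (b - a), c (a + l) := by
        apply Finset.sum_pos
        · intro l hl
          have hl' : l < b - a := Finset.mem_range.mp hl
          have hE := hedge (a + l) (by omega)
          have := (hbound (W (a + l)) (W (a + l + 1) - W (a + l))).1
          have : m₁ * ‖W (a + l + 1) - W (a + l)‖ ≤ c (a + l) := this
          nlinarith [hE.1]
        · exact ⟨0, Finset.mem_range.mpr (by omega)⟩
      linarith
    · -- replacement construction: replace the segment by the single edge i → j
      set s := b - a - 1 with hs
      set m' := a + 1 + t with hm'
      set U : ℕ → EuclideanSpace ℝ (Fin d) :=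
        fun n => if n ≤ a then W n else W (n + s) with hU
      set u : Fin (m' + 1) → EuclideanSpace ℝ (Fin d) := fun l => U l.1 with hu
      have hUlt : ∀ n, n ≤ a → U n = W n := by
        intro n hn; simp only [hU]; rw [if_pos hn]
      have hUgt : ∀ n, a < n → U n = W (n + s) := by
        intro n hn; simp only [hU]; rw [if_neg (by omega)]
      have hpos0 : 0 < ‖w j - w i‖ := by
        rw [norm_pos_iff, sub_ne_zero]; exact fun h => hwij h.symm
      have hlt0 : ‖w j - w i‖ < ε := by rwa [norm_sub_rev]
      have hadj : ∀ l : Fin m', 0 < ‖u l.succ - u l.castSucc‖ ∧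
          ‖u l.succ - u l.castSucc‖ < ε := by
        intro l
        have hl : l.1 < m' := l.isLt
        show 0 < ‖U (l.1 + 1) - U l.1‖ ∧ ‖U (l.1 + 1) - U l.1‖ < ε
        rcases lt_trichotomy l.1 a with h | h | h
        · rw [hUlt l.1 (by omega), hUlt (l.1 + 1) (by omega)]
          exact hedge l.1 (by omega)
        · rw [h, hUlt a le_rfl, hUgt (a + 1) (by omega),
            show a + 1 + s = b from by omega, hWi, hWj]
          exact ⟨hpos0, hlt0⟩
        · rw [hUgt l.1 h, hUgt (l.1 + 1) (by omega),
            show l.1 + 1 + s = l.1 + s + 1 from by omega]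
          exact hedge (l.1 + s) (by omega)
      have hmem : ∀ l, u l ∈ V := by
        intro l
        show U l.1 ∈ V
        simp only [hU, hW]
        split <;> exact hwV _
      have h0 : u 0 = w 0 := by
        show U 0 = w 0
        rw [hUlt 0 (by omega), hWle 0 (by omega)]
        exact congrArg w (Fin.ext rfl)
      have hlast : u (Fin.last m') = w (Fin.last m) := by
        show U m' = w (Fin.last m)
        rw [hUgt m' (by omega), show m' + s = m from by omega, hWle m le_rfl]
        exact congrArg w (Fin.ext rfl)
      set Cu : ℕ → ℝ := fun n =>
        if n < a then c n else if n = a then f (w i) (w j - w i) else c (n + s) with hCu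
      have hHu : Hsum f m' u = ∑ l ∈ Finset.range m', Cu l := by
        apply hsum_eq_sum_range
        intro l
        show f (U l.1) (U (l.1 + 1) - U l.1) = Cu l.1
        rcases lt_trichotomy l.1 a with h | h | h
        · rw [hUlt l.1 (by omega), hUlt (l.1 + 1) (by omega)]
          simp only [hCu]; rw [if_pos h]
        · rw [h, hUlt a le_rfl, hUgt (a + 1) (by omega),
            show a + 1 + s = b from by omega, hWi, hWj]
          simp [hCu]
        · rw [hUgt l.1 h, hUgt (l.1 + 1) (by omega),
            show l.1 + 1 + s = l.1 + s + 1 from by omega]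
          simp only [hCu]
          rw [if_neg (by omega), if_neg (by omega)]
      have hHu2 : Hsum f m' u = (∑ l ∈ Finset.range a, c l)
          + f (w i) (w j - w i) + ∑ l ∈ Finset.range t, c (b + l) := by
        rw [hHu, hm', Finset.sum_range_add, Finset.sum_range_succ]
        have e1 : ∑ l ∈ Finset.range a, Cu l = ∑ l ∈ Finset.range a, c l :=
          Finset.sum_congr rfl fun l hl => by
            simp only [hCu]; rw [if_pos (Finset.mem_range.mp hl)]
        have e2 : Cu a = f (w i) (w j - w i) := by simp [hCu]
        have e3 : ∑ l ∈ Finset.range t, Cu (a + 1 + l) = ∑ l ∈ Finset.range t, c (b + l) :=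
          Finset.sum_congr rfl fun l _ => by
            simp only [hCu]
            rw [if_neg (by omega), if_neg (by omega)]
            congr 1
            omega
        rw [e1, e2, e3]
      have hle := hmin m' u hmem h0 hlast hadj
      rw [hHw3, hHu2] at hle
      have hfb := (hbound (w i) (w j - w i)).2
      rw [norm_sub_rev] at hfb
      linarith
  -- conclude by telescoping
  have haκ : a ≤ (k : ℕ) := hik
  have hκb : (k : ℕ) ≤ b := hkj
  have htel : w k - w i =
      ∑ l ∈ Finset.range ((k : ℕ) - a), (W (a + (l + 1)) - W (a + l)) := by
    rw [Finset.sum_range_sub (fun l => W (a + l)) ((k : ℕ) - a)]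
    have e1 : W (a + ((k : ℕ) - a)) = w k := by
      simp only [show a + ((k : ℕ) - a) = (k : ℕ) from by omega]
      exact hWk
    have e2 : W (a + 0) = w i := by
      simp only [Nat.add_zero]
      exact hWi
    rw [e1, e2]
  have h1 : ‖w k - w i‖ ≤ ∑ l ∈ Finset.range (b - a), ‖W (a + (l + 1)) - W (a + l)‖ := by
    rw [htel]
    refine (norm_sum_le _ _).trans ?_
    apply Finset.sum_le_sum_of_subset_of_nonneg
    · exact Finset.range_subset_range.mpr (by omega)
    · intros; positivity
  have h2 : ∑ l ∈ Finset.range (b - a), m₁ * ‖W (a + (l + 1)) - W (a + l)‖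
      ≤ ∑ l ∈ Finset.range (b - a), c (a + l) :=
    Finset.sum_le_sum fun l _ => (hbound (W (a + l)) (W (a + (l + 1)) - W (a + l))).1
  rw [← Finset.mul_sum] at h2
  have hfin : m₁ * ‖w k - w i‖ ≤ m₂ * ε := by
    have h3 : m₁ * ‖w k - w i‖
        ≤ m₁ * ∑ l ∈ Finset.range (b - a), ‖W (a + (l + 1)) - W (a + l)‖ :=
      mul_le_mul_of_nonneg_left h1 hm₁.le
    have h4 : m₂ * ‖w i - w j‖ ≤ m₂ * ε := mul_le_mul_of_nonneg_left hij.le hm₂.le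
    linarith
  rw [show 2 * (m₂ / m₁) * ε = 2 * m₂ * ε / m₁ from by ring, le_div_iff₀ hm₁]
  nlinarith [norm_nonneg (w k - w i), mul_pos hm₂ hε]
end
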